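/- arXiv:0903.2038 — 5 statements merged into one kernel-verified Lean document; each statement's English description precedes it below -/
import Mathlib

section
/- Let (Ω, μ) be a measure space and let E and G be Banach spaces. For every bounded bilinear map φ: L¹(Ω) × E → G there exists a unique bounded linear operator T: L¹(Ω; E) → G such that T(f(·)η) = φ(f, η) for all f ∈ L¹(Ω) and η ∈ E, and this operator satisfies ‖T‖ = ‖φ‖. Moreover ‖f(·)η‖_{L¹(Ω;E)} = ‖f‖_{L¹} ‖η‖_E. (Equivalently: L¹(Ω; E), together with the bilinear map (f, η) ↦ f(·)η, is a projective tensor product of L¹(Ω) and E, so L¹(Ω) ⊗̂_π E ≅ L¹(Ω; E) isometrically.) -/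
open MeasureTheory
open scoped ENNReal

private lemma aux_norm_smul {Ω E : Type*} [MeasurableSpace Ω] {μ : Measure Ω}
    [NormedAddCommGroup E] [NormedSpace ℝ E]
    (f : Lp ℝ 1 μ) (η : E) (g : Lp E 1 μ)
    (h : (g : Ω → E) =ᵐ[μ] fun ω => f ω • η) : ‖g‖ = ‖f‖ * ‖η‖ := by
  have h1 : eLpNorm (fun ω => f ω • η) 1 μ = eLpNorm f 1 μ * ‖η‖₊ := by
    rw [eLpNorm_one_eq_lintegral_enorm, eLpNorm_one_eq_lintegral_enorm]
    simp_rw [enorm_smul]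
    exact lintegral_mul_const'' _ (Lp.aestronglyMeasurable f).enorm
  rw [Lp.norm_def, eLpNorm_congr_ae h, h1, ENNReal.toReal_mul, ENNReal.coe_toReal,
    coe_nnnorm, ← Lp.norm_def]

/-- **`L¹(Ω) ⊗̂_π E ≅ L¹(Ω; E)` (universal property form).** For every bounded bilinear
map `φ : L¹(Ω) × E → G` there is a unique bounded linear `T : L¹(Ω; E) → G` with
`T(f(·)η) = φ(f, η)`; moreover `‖T‖ = ‖φ‖` and `‖f(·)η‖_{L¹(Ω;E)} = ‖f‖₁ ‖η‖`.
Bounded bilinear maps are encoded as continuous linear maps `L¹(Ω) →L E →L G`, whose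
operator norm is exactly the bilinear norm. -/
theorem statement5 {Ω E G : Type*} [MeasurableSpace Ω] (μ : Measure Ω)
    [NormedAddCommGroup E] [NormedSpace ℝ E] [CompleteSpace E]
    [NormedAddCommGroup G] [NormedSpace ℝ G] [CompleteSpace G]
    (φ : Lp ℝ 1 μ →L[ℝ] E →L[ℝ] G) :
    (∀ (f : Lp ℝ 1 μ) (η : E) (g : Lp E 1 μ),
        (g : Ω → E) =ᵐ[μ] (fun ω => f ω • η) → ‖g‖ = ‖f‖ * ‖η‖) ∧
    (∃! T : Lp E 1 μ →L[ℝ] G,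
      ∀ (f : Lp ℝ 1 μ) (η : E) (g : Lp E 1 μ),
        (g : Ω → E) =ᵐ[μ] (fun ω => f ω • η) → T g = φ f η) ∧
    (∀ T : Lp E 1 μ →L[ℝ] G,
      (∀ (f : Lp ℝ 1 μ) (η : E) (g : Lp E 1 μ),
        (g : Ω → E) =ᵐ[μ] (fun ω => f ω • η) → T g = φ f η) →
      ‖T‖ = ‖φ‖) := by
  classical
  -- the vector measure associated to `φ`
  set ν : Set Ω → E →L[ℝ] G := fun s =>
    if h : MeasurableSet s ∧ μ s ≠ ∞ then φ (indicatorConstLp 1 h.1 h.2 (1 : ℝ)) else 0 with hν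
  have hν_eq : ∀ {s : Set Ω} (hs : MeasurableSet s) (hμs : μ s ≠ ∞),
      ν s = φ (indicatorConstLp 1 hs hμs (1 : ℝ)) := by
    intro s hs hμs; exact dif_pos ⟨hs, hμs⟩
  have hdom : DominatedFinMeasAdditive μ ν ‖φ‖ := by
    constructor
    · intro s t hs ht hμs hμt hst
      rw [hν_eq (hs.union ht) (measure_union_ne_top hμs hμt), hν_eq hs hμs, hν_eq ht hμt,
        indicatorConstLp_disjoint_union hs ht hμs hμt hst, map_add]
    · intro s hs hμs
      rw [hν_eq hs hμs.ne]
      calc ‖φ (indicatorConstLp 1 hs hμs.ne (1 : ℝ))‖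
          ≤ ‖φ‖ * ‖indicatorConstLp 1 hs hμs.ne (1 : ℝ)‖ := φ.le_opNorm _
        _ = ‖φ‖ * (μ s).toReal := by
            rw [norm_indicatorConstLp one_ne_zero ENNReal.one_ne_top]
            simp [Measure.real]
  set T : Lp E 1 μ →L[ℝ] G := L1.setToL1 hdom with hTdef
  -- smul of an indicator
  have hind_smul : ∀ {s : Set Ω} (hs : MeasurableSet s) (hμs : μ s ≠ ∞) (c : ℝ),
      indicatorConstLp 1 hs hμs c = c • indicatorConstLp 1 hs hμs (1 : ℝ) := by
    intro s hs hμs c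
    apply Lp.ext
    filter_upwards [indicatorConstLp_coeFn (p := 1) (μ := μ) (hs := hs) (hμs := hμs) (c := c),
      Lp.coeFn_smul c (indicatorConstLp 1 hs hμs (1 : ℝ)),
      indicatorConstLp_coeFn (p := 1) (μ := μ) (hs := hs) (hμs := hμs) (c := (1 : ℝ))]
      with ω h1 h2 h3
    rw [h1, h2, Pi.smul_apply, h3]
    by_cases hω : ω ∈ s <;> simp [Set.indicator, hω]
  -- the embedding `f ↦ f(·)η`
  set S : E → (Lp ℝ 1 μ →L[ℝ] Lp E 1 μ) := fun η =>
    (ContinuousLinearMap.toSpanSingleton ℝ η).compLpL 1 μ with hS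
  have hS_ae : ∀ (η : E) (f : Lp ℝ 1 μ), (S η f : Ω → E) =ᵐ[μ] fun ω => f ω • η := by
    intro η f
    filter_upwards [ContinuousLinearMap.coeFn_compLpL (p := 1) (μ := μ)
      (ContinuousLinearMap.toSpanSingleton ℝ η) f] with ω hω
    rw [hω, ContinuousLinearMap.toSpanSingleton_apply]
  have key : ∀ (η : E) (f : Lp ℝ 1 μ), T (S η f) = φ.flip η f := by
    intro η
    refine Lp.induction ENNReal.one_ne_top (fun f => T (S η f) = φ.flip η f) ?_ ?_ ?_
    · intro c s hs hμs
      rw [Lp.simpleFunc.coe_indicatorConst]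
      have hSind : S η (indicatorConstLp 1 hs hμs.ne c) = indicatorConstLp 1 hs hμs.ne (c • η) := by
        apply Lp.ext
        filter_upwards [hS_ae η (indicatorConstLp 1 hs hμs.ne c),
          indicatorConstLp_coeFn (p := 1) (μ := μ) (hs := hs) (hμs := hμs.ne) (c := c),
          indicatorConstLp_coeFn (p := 1) (μ := μ) (hs := hs) (hμs := hμs.ne) (c := c • η)]
          with ω h1 h2 h3
        rw [h1, h2, h3]
        by_cases hω : ω ∈ s <;> simp [Set.indicator, hω]
      rw [hSind, hTdef, L1.setToL1_indicatorConstLp hdom hs hμs.ne (c • η), hν_eq hs hμs.ne,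
        ContinuousLinearMap.flip_apply, hind_smul hs hμs.ne c]
      simp only [_root_.map_smul, ContinuousLinearMap.smul_apply]
    · intro f g hf hg _ Pf Pg
      rw [map_add, map_add, map_add, Pf, Pg]
    · exact isClosed_eq (T.continuous.comp (S η).continuous) (φ.flip η).continuous
  have hT : ∀ (f : Lp ℝ 1 μ) (η : E) (g : Lp E 1 μ),
      (g : Ω → E) =ᵐ[μ] (fun ω => f ω • η) → T g = φ f η := by
    intro f η g hg
    have : g = S η f := Lp.ext (hg.trans (hS_ae η f).symm)
    rw [this, key]
    rfl
  have huniq : ∀ T' : Lp E 1 μ →L[ℝ] G,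
      (∀ (f : Lp ℝ 1 μ) (η : E) (g : Lp E 1 μ),
        (g : Ω → E) =ᵐ[μ] (fun ω => f ω • η) → T' g = φ f η) → T' = T := by
    intro T' hT'
    ext g
    revert g
    refine Lp.induction ENNReal.one_ne_top (fun g => T' g = T g) ?_ ?_ ?_
    · intro c s hs hμs
      rw [Lp.simpleFunc.coe_indicatorConst]
      have hae : (indicatorConstLp 1 hs hμs.ne c : Ω → E) =ᵐ[μ]
          fun ω => (indicatorConstLp 1 hs hμs.ne (1 : ℝ)) ω • c := by
        filter_upwards [indicatorConstLp_coeFn (p := 1) (μ := μ) (hs := hs) (hμs := hμs.ne)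
          (c := c), indicatorConstLp_coeFn (p := 1) (μ := μ) (hs := hs) (hμs := hμs.ne)
          (c := (1 : ℝ))] with ω h1 h2
        rw [h1, h2]
        by_cases hω : ω ∈ s <;> simp [Set.indicator, hω]
      rw [hT' _ c _ hae, hT _ c _ hae]
    · intro f g hf hg _ Pf Pg
      rw [map_add, map_add, Pf, Pg]
    · exact isClosed_eq T'.continuous T.continuous
  have hnormT : ‖T‖ = ‖φ‖ := by
    refine le_antisymm (L1.norm_setToL1_le hdom (norm_nonneg φ)) ?_
    refine ContinuousLinearMap.opNorm_le_bound φ (norm_nonneg T) fun f => ?_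
    refine ContinuousLinearMap.opNorm_le_bound (φ f)
      (mul_nonneg (norm_nonneg T) (norm_nonneg f)) fun η => ?_
    have h1 : φ f η = T (S η f) := (hT f η (S η f) (hS_ae η f)).symm
    have h2 : ‖S η f‖ = ‖f‖ * ‖η‖ := aux_norm_smul f η (S η f) (hS_ae η f)
    rw [h1]
    calc ‖T (S η f)‖ ≤ ‖T‖ * ‖S η f‖ := T.le_opNorm _
      _ = ‖T‖ * ‖f‖ * ‖η‖ := by rw [h2, mul_assoc]
  exact ⟨fun f η g hg => aux_norm_smul f η g hg, ⟨T, hT, huniq⟩,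
    fun T' hT' => by rw [huniq T' hT', hnormT]⟩
end

section
/- (Arendt–Thomaschewski.) Let (Ω, Σ, μ) be a σ-finite measure space, E a separable Banach space, and p ∈ [1, ∞]. Then for every local operator T ∈ ℒ(L^p(Ω; E)) there exists a function M: Ω → ℒ(E) with M(·)x ∈ L^∞(Ω; E) for every x ∈ E, such that (Tf)(ω) = M(ω) f(ω) for μ-almost every ω ∈ Ω, for every f ∈ L^p(Ω; E). -/
open MeasureTheory Filter Set
open scoped ENNReal Topology

section AuxAT

variable {E : Type*} [NormedAddCommGroup E]

/-- Lists with entries in a countable set form a countable set. -/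
lemma aux_countable_lists {t : Set E} (ht : t.Countable) :
    {l : List E | ∀ y ∈ l, y ∈ t}.Countable := by
  haveI := ht.to_subtype
  have hsub : {l : List E | ∀ y ∈ l, y ∈ t} ⊆ Set.range (fun l : List t => l.map (↑)) := by
    intro l hl
    refine ⟨l.attach.map (fun y => (⟨y.1, hl _ y.2⟩ : t)), ?_⟩
    simp [List.map_map, Function.comp_def]
  exact (Set.countable_range _).mono hsub

lemma aux_countable_closure {s : Set E} (hs : s.Countable) :
    ((AddSubgroup.closure s : AddSubgroup E) : Set E).Countable := by
  have ht : (s ∪ -s).Countable := hs.union (by simpa using hs.image (fun x => -x))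
  have hsub : ((AddSubgroup.closure s : AddSubgroup E) : Set E) ⊆
      List.sum '' {l : List E | ∀ y ∈ l, y ∈ s ∪ -s} := by
    intro x hx
    have hx' : x ∈ AddSubmonoid.closure (s ∪ -s) := by
      rw [← AddSubgroup.closure_toAddSubmonoid]
      exact hx
    obtain ⟨l, hl, hsum⟩ := AddSubmonoid.exists_list_of_mem_closure hx'
    exact ⟨l, hl, hsum⟩
  exact ((aux_countable_lists ht).image _).mono hsub

variable [NormedSpace ℝ E] [CompleteSpace E]

/-- Extend an additive, bounded map defined on a dense additive subgroup to a
continuous linear map. -/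
lemma aux_extend {D : AddSubgroup E} (hD : Dense (D : Set E)) (φ : E → E) {C : ℝ} (hC : 0 ≤ C)
    (hadd : ∀ d ∈ D, ∀ e ∈ D, φ (d + e) = φ d + φ e)
    (hbdd : ∀ d ∈ D, ‖φ d‖ ≤ C * ‖d‖) :
    ∃ L : E →L[ℝ] E, (∀ d ∈ D, L d = φ d) ∧ ∀ x, ‖L x‖ ≤ C * ‖x‖ := by
  have h0 : φ 0 = 0 := by
    have h := hadd 0 D.zero_mem 0 D.zero_mem
    rw [add_zero] at h
    exact (left_eq_add.mp h)
  have hlip : ∀ d ∈ D, ∀ e ∈ D, ‖φ d - φ e‖ ≤ C * ‖d - e‖ := by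
    intro d hd e he
    have h1 : φ (d - e + e) = φ (d - e) + φ e := hadd _ (D.sub_mem hd he) _ he
    rw [sub_add_cancel] at h1
    have : φ d - φ e = φ (d - e) := by rw [h1]; abel
    rw [this]
    exact hbdd _ (D.sub_mem hd he)
  set ψ : D → E := fun d => φ d with hψdef
  have hψ : LipschitzWith C.toNNReal ψ := by
    apply LipschitzWith.of_dist_le_mul
    intro a b
    rw [Subtype.dist_eq, dist_eq_norm, dist_eq_norm, Real.coe_toNNReal C hC]
    exact hlip _ a.2 _ b.2
  have hdr : DenseRange ((↑) : D → E) := hD.denseRange_val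
  have hui : IsUniformInducing ((↑) : D → E) := isUniformEmbedding_subtype_val.isUniformInducing
  have hdi : IsDenseInducing ((↑) : D → E) := hui.isDenseInducing hdr
  set g : E → E := hdi.extend ψ with hgdef
  have hg_cont : Continuous g :=
    (uniformContinuous_uniformly_extend hui hdr hψ.uniformContinuous).continuous
  have hg_eq : ∀ d : D, g (d : E) = φ d := fun d => hdi.extend_eq hψ.continuous d
  have hadd' : ∀ x y : E, g (x + y) = g x + g y := by
    have heq : (fun p : E × E => g (p.1 + p.2)) = fun p : E × E => g p.1 + g p.2 := by
      apply Continuous.ext_on (hD.prod hD)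
      · exact hg_cont.comp continuous_add
      · exact (hg_cont.comp continuous_fst).add (hg_cont.comp continuous_snd)
      · rintro ⟨x, y⟩ ⟨hx, hy⟩
        have h1 : g (x + y) = φ (x + y) := hg_eq ⟨x + y, D.add_mem hx hy⟩
        have h2 : g x = φ x := hg_eq ⟨x, hx⟩
        have h3 : g y = φ y := hg_eq ⟨y, hy⟩
        simp only [h1, h2, h3]
        exact hadd _ hx _ hy
    intro x y
    exact congrFun heq (x, y)
  have hb : ∀ x, ‖g x‖ ≤ C * ‖x‖ := by
    have hclosed : IsClosed {x : E | ‖g x‖ ≤ C * ‖x‖} :=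
      isClosed_le hg_cont.norm (continuous_const.mul continuous_norm)
    have hsub : (D : Set E) ⊆ {x : E | ‖g x‖ ≤ C * ‖x‖} := by
      intro d hd
      simp only [Set.mem_setOf_eq, hg_eq ⟨d, hd⟩]
      exact hbdd _ hd
    intro x
    have hx : x ∈ closure (D : Set E) := by rw [hD.closure_eq]; trivial
    exact (closure_mono hsub).trans hclosed.closure_eq.subset hx
  refine ⟨AddMonoidHom.toRealLinearMap (AddMonoidHom.mk' g hadd') hg_cont, ?_, ?_⟩
  · intro d hd
    exact hg_eq ⟨d, hd⟩
  · intro x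
    exact hb x

end AuxAT

section AuxAT2

variable {Ω E : Type*} [MeasurableSpace Ω] {μ : Measure Ω}
  [NormedAddCommGroup E]

lemma aux_sm [TopologicalSpace.SeparableSpace E]
    {F : ℕ → Ω → E} (hF : ∀ n, StronglyMeasurable (F n)) {idx : Ω → ℕ}
    (hidx : Measurable idx) :
    StronglyMeasurable fun ω => F (idx ω) ω := by
  borelize E
  haveI : SecondCountableTopology E :=
    UniformSpace.secondCountable_of_separable E
  have h1 : Measurable (fun q : Ω × ℕ => F q.2 q.1) :=
    measurable_from_prod_countable_left (fun n => (hF n).measurable)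
  exact (h1.comp (measurable_id.prodMk hidx)).stronglyMeasurable

lemma aux_ae_le_norm_top (f : Lp E ∞ μ) : ∀ᵐ ω ∂μ, ‖f ω‖ ≤ ‖f‖ := by
  have h := enorm_ae_le_eLpNormEssSup (⇑f) μ
  have hne : eLpNorm (⇑f) ∞ μ ≠ ∞ := Lp.eLpNorm_ne_top f
  rw [eLpNorm_exponent_top] at hne
  filter_upwards [h] with ω hω
  have h2 : ‖f ω‖ ≤ (eLpNormEssSup (⇑f) μ).toReal := by
    have := ENNReal.toReal_mono hne hω
    simpa using this
  rw [Lp.norm_def, eLpNorm_exponent_top]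
  exact h2

lemma aux_ae_le_norm_top' {p : ℝ≥0∞} (hp : p = ∞) (f : Lp E p μ) :
    ∀ᵐ ω ∂μ, ‖f ω‖ ≤ ‖f‖ := by
  subst hp
  exact aux_ae_le_norm_top f

variable [NormedSpace ℝ E] {p : ℝ≥0∞} [Fact (1 ≤ p)]

omit [NormedSpace ℝ E] in
lemma aux_tim {g : ℕ → Lp E p μ} {g₀ : Lp E p μ} (hg : Tendsto g atTop (𝓝 g₀)) :
    TendstoInMeasure μ (fun k => ⇑(g k)) atTop ⇑g₀ := by
  have hp0 : p ≠ 0 := by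
    have := (Fact.out : (1:ℝ≥0∞) ≤ p); intro h; rw [h] at this; simp at this
  apply tendstoInMeasure_of_tendsto_eLpNorm hp0
    (fun k => Lp.aestronglyMeasurable _) (Lp.aestronglyMeasurable _)
  have heq : (fun k => eLpNorm (⇑(g k) - ⇑g₀) p μ)
      = fun k => ENNReal.ofReal (dist (g k) g₀) := by
    funext k
    rw [← Lp.edist_def, edist_dist]
  rw [heq]
  have : Tendsto (fun k => dist (g k) g₀) atTop (𝓝 0) :=
    tendsto_iff_dist_tendsto_zero.mp hg
  simpa using ENNReal.tendsto_ofReal this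

lemma aux_limit (T : Lp E p μ →L[ℝ] Lp E p μ) (M : Ω → E →L[ℝ] E)
    {f : ℕ → Lp E p μ} {f₀ : Lp E p μ} (hconv : Tendsto f atTop (𝓝 f₀))
    (hae : ∀ k, ∀ᵐ ω ∂μ, T (f k) ω = M ω (f k ω)) :
    ∀ᵐ ω ∂μ, T f₀ ω = M ω (f₀ ω) := by
  obtain ⟨ns, hns_mono, hns⟩ := (aux_tim hconv).exists_seq_tendsto_ae
  have hTconv : Tendsto (fun k => T (f (ns k))) atTop (𝓝 (T f₀)) :=
    ((T.continuous.tendsto _).comp (hconv.comp hns_mono.tendsto_atTop))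
  obtain ⟨ms, hms_mono, hms⟩ := (aux_tim hTconv).exists_seq_tendsto_ae
  filter_upwards [hns, hms, ae_all_iff.mpr hae] with ω h1 h2 h3
  have h1' : Tendsto (fun j => f (ns (ms j)) ω) atTop (𝓝 (f₀ ω)) :=
    h1.comp hms_mono.tendsto_atTop
  have h4 : Tendsto (fun j => M ω (f (ns (ms j)) ω)) atTop (𝓝 (M ω (f₀ ω))) :=
    ((M ω).continuous.tendsto _).comp h1'
  have h5 : Tendsto (fun j => T (f (ns (ms j))) ω) atTop (𝓝 (T f₀ ω)) := h2
  have h6 : (fun j => T (f (ns (ms j))) ω) = fun j => M ω (f (ns (ms j)) ω) := by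
    funext j; exact h3 (ns (ms j))
  rw [h6] at h5
  exact tendsto_nhds_unique h5 h4

end AuxAT2

set_option maxHeartbeats 2000000 in
/-- **Arendt–Thomaschewski: local operators are multiplication operators.** Let
`(Ω, Σ, μ)` be σ-finite, `E` a separable Banach space and `p ∈ [1, ∞]`. An operator
`T ∈ ℒ(L^p(Ω; E))` is *local* if `Tf = 0` a.e. on `{f = 0}` for every `f`. Every local
operator is given by a multiplier `M : Ω → ℒ(E)` with `M(·)x ∈ L^∞(Ω; E)` for all `x ∈ E`:
`(Tf)(ω) = M(ω) f(ω)` a.e. for every `f ∈ L^p(Ω; E)`. -/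
theorem statement10 {Ω E : Type*} [MeasurableSpace Ω] (μ : Measure Ω) [SigmaFinite μ]
    [NormedAddCommGroup E] [NormedSpace ℝ E] [CompleteSpace E]
    [TopologicalSpace.SeparableSpace E]
    (p : ℝ≥0∞) [Fact (1 ≤ p)]
    (T : Lp E p μ →L[ℝ] Lp E p μ)
    (hT : ∀ f : Lp E p μ, ∀ᵐ ω ∂μ, f ω = 0 → T f ω = 0) :
    ∃ M : Ω → E →L[ℝ] E,
      (∀ x : E, MemLp (fun ω => M ω x) ⊤ μ) ∧
      ∀ f : Lp E p μ, ∀ᵐ ω ∂μ, T f ω = M ω (f ω) := by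
  classical
  have hp0 : p ≠ 0 := by
    have := (Fact.out : (1:ℝ≥0∞) ≤ p); intro h; rw [h] at this; simp at this
  have hC : (0:ℝ) ≤ ‖T‖ := norm_nonneg T
  set S : ℕ → Set Ω := spanningSets μ with hSdef
  have hSm : ∀ n, MeasurableSet (S n) := measurableSet_spanningSets μ
  have hSfin : ∀ n, μ (S n) ≠ ∞ := fun n => (measure_spanningSets_lt_top μ n).ne
  have hSmono : Monotone S := monotone_spanningSets μ
  have hSunion : ∀ ω, ∃ n, ω ∈ S n := by
    intro ω
    have : ω ∈ ⋃ n, S n := by rw [hSdef, iUnion_spanningSets]; trivial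
    exact mem_iUnion.mp this
  -- locality in indicator form
  have hloc : ∀ (f g : Lp E p μ) {A : Set Ω}, MeasurableSet A →
      (⇑g =ᵐ[μ] A.indicator ⇑f) → (⇑(T g) =ᵐ[μ] A.indicator ⇑(T f)) := by
    intro f g A hA hg
    have hfg : ⇑(f - g) =ᵐ[μ] Aᶜ.indicator ⇑f := by
      filter_upwards [Lp.coeFn_sub f g, hg] with ω h1 h2
      rw [h1, Pi.sub_apply, h2]
      by_cases hω : ω ∈ A
      · rw [Set.indicator_of_mem hω, Set.indicator_of_notMem (by simpa using hω), sub_self]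
      · rw [Set.indicator_of_notMem hω, Set.indicator_of_mem (by simpa using hω), sub_zero]
    have h3 : ⇑(T f) =ᵐ[μ] ⇑(T g) + ⇑(T (f - g)) := by
      have he : T f = T g + T (f - g) := by
        rw [← map_add]
        congr 1
        abel
      rw [he]
      exact Lp.coeFn_add _ _
    filter_upwards [hT g, hT (f - g), h3, hg, hfg] with ω hω1 hω2 hω3 hω4 hω5
    by_cases hmem : ω ∈ A
    · rw [Set.indicator_of_mem hmem]
      have hz : T (f - g) ω = 0 :=
        hω2 (by rw [hω5, Set.indicator_of_notMem (by simpa using hmem)])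
      rw [hω3, Pi.add_apply, hz, add_zero]
    · rw [Set.indicator_of_notMem hmem]
      exact hω1 (by rw [hω4, Set.indicator_of_notMem hmem])
  -- the basic building blocks
  set c : ℕ → E → Lp E p μ := fun n x => indicatorConstLp p (hSm n) (hSfin n) x with hcdef
  have hc_coe : ∀ n x, ⇑(c n x) =ᵐ[μ] (S n).indicator (fun _ => x) := fun n x =>
    indicatorConstLp_coeFn
  have hcnorm : ∀ n (x : E), ‖c n x‖ ≤ ‖x‖ * (μ (S n)).toReal ^ (1 / p.toReal) := fun n x =>
    norm_indicatorConstLp_le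
  -- pointwise bound
  have hbd : ∀ n (x : E), ∀ᵐ ω ∂μ, ω ∈ S n → ‖T (c n x) ω‖ ≤ ‖T‖ * ‖x‖ := by
    intro n x
    by_cases hp : p = ∞
    · subst hp
      have h1 : ∀ᵐ ω ∂μ, ‖T (c n x) ω‖ ≤ ‖T (c n x)‖ := by
        have h := enorm_ae_le_eLpNormEssSup (⇑(T (c n x))) μ
        have hne : eLpNormEssSup (⇑(T (c n x))) μ ≠ ∞ := by
          have := Lp.eLpNorm_ne_top (T (c n x))
          rwa [eLpNorm_exponent_top] at this
        filter_upwards [h] with ω hω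
        rw [Lp.norm_def, eLpNorm_exponent_top]
        have := ENNReal.toReal_mono hne hω
        simpa using this
      filter_upwards [h1] with ω hω _
      refine hω.trans ((T.le_opNorm _).trans ?_)
      have h2 : ‖c n x‖ ≤ ‖x‖ := by
        have := hcnorm n x
        simpa using this
      exact mul_le_mul_of_nonneg_left h2 (norm_nonneg T)
    · have hpt : 0 < p.toReal := ENNReal.toReal_pos hp0 hp
      have key : ∀ k : ℕ, ∀ᵐ ω ∂μ, ω ∈ S n → ‖T (c n x) ω‖ ≤ ‖T‖ * ‖x‖ + 1 / (k + 1) := by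
        intro k
        set b : ℝ := ‖T‖ * ‖x‖ + 1 / (k + 1) with hbdef
        have hb0 : 0 < b := by positivity
        have hgm : StronglyMeasurable (⇑(T (c n x))) := Lp.stronglyMeasurable _
        set A : Set Ω := S n ∩ {ω | b ≤ ‖T (c n x) ω‖} with hAdef
        have hAm : MeasurableSet A := by
          borelize E
          exact (hSm n).inter (measurableSet_le measurable_const hgm.measurable.norm)
        have hAfin : μ A ≠ ∞ :=
          (lt_of_le_of_lt (measure_mono inter_subset_left) (hSfin n).lt_top).ne
        suffices hA0 : μ A = 0 by
          have hnm : ∀ᵐ ω ∂μ, ω ∉ A := by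
            rw [ae_iff]
            simpa using hA0
          filter_upwards [hnm] with ω hω hmem
          by_contra hcon
          push_neg at hcon
          exact hω ⟨hmem, le_of_lt hcon⟩
        by_contra hA0
        set h' : Lp E p μ := indicatorConstLp p hAm hAfin x with hh'def
        have hcoe : ⇑h' =ᵐ[μ] A.indicator ⇑(c n x) := by
          have e1 : ⇑h' =ᵐ[μ] A.indicator (fun _ => x) := indicatorConstLp_coeFn
          filter_upwards [e1, hc_coe n x] with ω h1 h2
          rw [h1]
          by_cases hω : ω ∈ A
          · rw [Set.indicator_of_mem hω, Set.indicator_of_mem hω, h2,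
              Set.indicator_of_mem hω.1]
          · rw [Set.indicator_of_notMem hω, Set.indicator_of_notMem hω]
        have hTh' := hloc (c n x) h' hAm hcoe
        -- lower bound
        have hlow : ENNReal.ofReal b * (μ A) ^ (1 / p.toReal) ≤ eLpNorm (⇑(T h')) p μ := by
          have h1 : eLpNorm (A.indicator (fun _ => b)) p μ ≤ eLpNorm (⇑(T h')) p μ := by
            apply eLpNorm_mono_ae
            filter_upwards [hTh'] with ω hω
            by_cases hmem : ω ∈ A
            · rw [Set.indicator_of_mem hmem, hω, Set.indicator_of_mem hmem,
                Real.norm_eq_abs, abs_of_nonneg hb0.le]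
              exact hmem.2
            · rw [Set.indicator_of_notMem hmem]
              simp
          have h2 : eLpNorm (A.indicator (fun _ => b)) p μ
              = ENNReal.ofReal b * (μ A) ^ (1 / p.toReal) := by
            rw [eLpNorm_indicator_const hAm hp0 hp]
            congr 1
            rw [← Real.enorm_eq_ofReal hb0.le]
          rw [← h2]
          exact h1
        -- upper bound
        have hup : eLpNorm (⇑(T h')) p μ
            ≤ ENNReal.ofReal (‖T‖ * ‖x‖) * (μ A) ^ (1 / p.toReal) := by
          have h1 : eLpNorm (⇑(T h')) p μ = ENNReal.ofReal ‖T h'‖ := by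
            rw [Lp.norm_def, ENNReal.ofReal_toReal (Lp.eLpNorm_ne_top _)]
          rw [h1]
          have h2 : ‖T h'‖ ≤ ‖T‖ * ‖x‖ * (μ A).toReal ^ (1 / p.toReal) := by
            refine (T.le_opNorm h').trans ?_
            rw [mul_assoc]
            refine mul_le_mul_of_nonneg_left ?_ (norm_nonneg T)
            exact norm_indicatorConstLp_le
          refine (ENNReal.ofReal_le_ofReal h2).trans ?_
          rw [ENNReal.ofReal_mul (by positivity)]
          refine mul_le_mul_right ?_ _
          rw [← ENNReal.ofReal_rpow_of_nonneg ENNReal.toReal_nonneg (by positivity),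
            ENNReal.ofReal_toReal hAfin]
        have hm0 : (μ A) ^ (1 / p.toReal) ≠ 0 := by
          simp only [ne_eq, ENNReal.rpow_eq_zero_iff, not_or]
          constructor
          · rintro ⟨h, -⟩; exact hA0 h
          · rintro ⟨h, -⟩; exact hAfin h
        have hmtop : (μ A) ^ (1 / p.toReal) ≠ ∞ := by
          exact ENNReal.rpow_ne_top_of_nonneg (by positivity) hAfin
        have hble : ENNReal.ofReal b ≤ ENNReal.ofReal (‖T‖ * ‖x‖) := by
          rw [← ENNReal.mul_le_mul_iff_left hm0 hmtop]
          exact hlow.trans hup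
        have hb' : b ≤ ‖T‖ * ‖x‖ :=
          le_trans (le_of_eq rfl) ((ENNReal.ofReal_le_ofReal_iff (by positivity)).mp hble)
        have hpos : (0:ℝ) < 1 / (k + 1) := by positivity
        rw [hbdef] at hb'
        linarith
      have := ae_all_iff.2 key
      filter_upwards [this] with ω hω hmem
      have hall : ∀ k : ℕ, ‖T (c n x) ω‖ ≤ ‖T‖ * ‖x‖ + 1 / (k + 1) := fun k => hω k hmem
      refine le_of_forall_pos_le_add ?_
      intro ε hε
      obtain ⟨k, hk⟩ := exists_nat_one_div_lt hε
      exact (hall k).trans (by linarith)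
  -- countable dense subgroup
  obtain ⟨s₀, hs₀c, hs₀d⟩ := TopologicalSpace.exists_countable_dense E
  set D : AddSubgroup E := AddSubgroup.closure s₀ with hDdef
  have hDc : ((D : Set E)).Countable := aux_countable_closure hs₀c
  have hDd : Dense (D : Set E) := hs₀d.mono AddSubgroup.subset_closure
  -- index function
  set idx : Ω → ℕ := spanningSetsIndex μ with hidxdef
  have hidx : Measurable idx := measurableSet_spanningSetsIndex μ
  have hmemidx : ∀ ω, ω ∈ S (idx ω) := fun ω =>
    disjointed_subset _ _ (mem_disjointed_spanningSetsIndex μ ω)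
  set G : E → Ω → E := fun x ω => T (c (idx ω) x) ω with hGdef
  -- a.e. additivity
  have hae_add : ∀ n (x y : E),
      ∀ᵐ ω ∂μ, T (c n (x + y)) ω = T (c n x) ω + T (c n y) ω := by
    intro n x y
    have he : c n x + c n y = c n (x + y) := by
      simp only [hcdef]
      exact indicatorConstLp_add
    have he2 : T (c n (x + y)) = T (c n x) + T (c n y) := by rw [← he, map_add]
    filter_upwards [Lp.coeFn_add (T (c n x)) (T (c n y))] with ω hω
    rw [he2, hω, Pi.add_apply]
  -- a.e. consistency
  have hae_cons : ∀ m n, m ≤ n → ∀ x : E,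
      ∀ᵐ ω ∂μ, ω ∈ S m → T (c m x) ω = T (c n x) ω := by
    intro m n hmn x
    have hcoe : ⇑(c m x) =ᵐ[μ] (S m).indicator ⇑(c n x) := by
      filter_upwards [hc_coe m x, hc_coe n x] with ω h1 h2
      rw [h1]
      by_cases hω : ω ∈ S m
      · rw [Set.indicator_of_mem hω, Set.indicator_of_mem hω, h2,
          Set.indicator_of_mem (hSmono hmn hω)]
      · rw [Set.indicator_of_notMem hω, Set.indicator_of_notMem hω]
    filter_upwards [hloc (c n x) (c m x) (hSm m) hcoe] with ω hω hmem
    rw [hω, Set.indicator_of_mem hmem]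
  -- the good set
  have hQae : ∀ᵐ ω ∂μ, (∀ d ∈ D, ∀ e ∈ D, G (d + e) ω = G d ω + G e ω) ∧
      (∀ d ∈ D, ‖G d ω‖ ≤ ‖T‖ * ‖d‖) := by
    have h1 : ∀ᵐ ω ∂μ, ∀ n : ℕ, ∀ d ∈ (D : Set E), ∀ e ∈ (D : Set E),
        T (c n (d + e)) ω = T (c n d) ω + T (c n e) ω := by
      rw [ae_all_iff]
      intro n
      rw [ae_ball_iff hDc]
      intro d hd
      rw [ae_ball_iff hDc]
      intro e he
      exact hae_add n d e
    have h2 : ∀ᵐ ω ∂μ, ∀ n : ℕ, ∀ d ∈ (D : Set E), ω ∈ S n →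
        ‖T (c n d) ω‖ ≤ ‖T‖ * ‖d‖ := by
      rw [ae_all_iff]
      intro n
      rw [ae_ball_iff hDc]
      intro d hd
      exact hbd n d
    filter_upwards [h1, h2] with ω hω1 hω2
    refine ⟨fun d hd e he => ?_, fun d hd => ?_⟩
    · simp only [hGdef]
      exact hω1 (idx ω) d hd e he
    · simp only [hGdef]
      exact hω2 (idx ω) d hd (hmemidx ω)
  set Q : Ω → Prop := fun ω => (∀ d ∈ D, ∀ e ∈ D, G (d + e) ω = G d ω + G e ω) ∧
      (∀ d ∈ D, ‖G d ω‖ ≤ ‖T‖ * ‖d‖) with hQdef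
  have hQex : ∀ ω, Q ω → ∃ L : E →L[ℝ] E, (∀ d ∈ D, L d = G d ω) ∧ ∀ x, ‖L x‖ ≤ ‖T‖ * ‖x‖ :=
    fun ω hQ => aux_extend hDd (fun x => G x ω) hC hQ.1 hQ.2
  set M : Ω → E →L[ℝ] E := fun ω => if h : Q ω then (hQex ω h).choose else 0 with hMdef
  have hM1 : ∀ᵐ ω ∂μ, ∀ d ∈ D, M ω d = G d ω := by
    filter_upwards [hQae] with ω h
    intro d hd
    rw [hMdef]
    simp only [dif_pos h]
    exact (hQex ω h).choose_spec.1 d hd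
  have hM2 : ∀ ω x, ‖M ω x‖ ≤ ‖T‖ * ‖x‖ := by
    intro ω x
    rw [hMdef]
    by_cases h : Q ω
    · simp only [dif_pos h]
      exact (hQex ω h).choose_spec.2 x
    · simp only [dif_neg h]
      simpa using mul_nonneg hC (norm_nonneg x)
  refine ⟨M, ?_, ?_⟩
  · -- MemLp part
    intro x
    obtain ⟨u, huD, hux⟩ := mem_closure_iff_seq_limit.mp (hDd x)
    have hGsm : ∀ d : E, StronglyMeasurable (G d) := by
      intro d
      simp only [hGdef]
      exact aux_sm (fun k => Lp.stronglyMeasurable (T (c k d))) hidx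
    have htend : ∀ᵐ ω ∂μ, Tendsto (fun k => G (u k) ω) atTop (𝓝 (M ω x)) := by
      filter_upwards [hM1] with ω hω
      have h1 : (fun k => G (u k) ω) = fun k => M ω (u k) :=
        funext (fun k => (hω (u k) (huD k)).symm)
      rw [h1]
      exact ((M ω).continuous.tendsto x).comp hux
    exact memLp_top_of_bound
      (aestronglyMeasurable_of_tendsto_ae atTop
        (fun k => (hGsm (u k)).aestronglyMeasurable) htend)
      _ (ae_of_all _ (fun ω => hM2 ω x))
  -- identification with indicators of subgroup elements
  have hMd : ∀ d ∈ (D : Set E), ∀ n, ∀ᵐ ω ∂μ, ω ∈ S n → M ω d = T (c n d) ω := by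
    intro d hd n
    have hcons : ∀ᵐ ω ∂μ, ∀ m k : ℕ, m ≤ k → (ω ∈ S m → T (c m d) ω = T (c k d) ω) := by
      rw [ae_all_iff]
      intro m
      rw [ae_all_iff]
      intro k
      by_cases hmk : m ≤ k
      · filter_upwards [hae_cons m k hmk d] with ω hω _
        exact hω
      · exact ae_of_all _ (fun ω hcon => absurd hcon hmk)
    filter_upwards [hM1, hcons] with ω h1 h2 hmem
    have e1 : T (c (idx ω) d) ω = T (c (max n (idx ω)) d) ω :=
      h2 (idx ω) (max n (idx ω)) (le_max_right _ _) (hmemidx ω)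
    have e2 : T (c n d) ω = T (c (max n (idx ω)) d) ω :=
      h2 n (max n (idx ω)) (le_max_left _ _) hmem
    rw [h1 d hd]
    simp only [hGdef]
    rw [e1, e2]
  have hkey : ∀ d ∈ (D : Set E), ∀ (A : Set Ω), MeasurableSet A → ∀ (g : Lp E p μ),
      (⇑g =ᵐ[μ] A.indicator (fun _ => d)) → ∀ᵐ ω ∂μ, T g ω = M ω (g ω) := by
    intro d hd A hA g hg
    have hoff : ∀ᵐ ω ∂μ, ω ∉ A → T g ω = 0 := by
      filter_upwards [hT g, hg] with ω h1 h2 hmem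
      exact h1 (by rw [h2, Set.indicator_of_notMem hmem])
    have hon : ∀ n : ℕ, ∀ᵐ ω ∂μ, ω ∈ A → ω ∈ S n → T g ω = M ω d := by
      intro n
      have hBm : MeasurableSet (A ∩ S n) := hA.inter (hSm n)
      have hBfin : μ (A ∩ S n) ≠ ∞ :=
        (lt_of_le_of_lt (measure_mono inter_subset_right) (hSfin n).lt_top).ne
      set g₂ : Lp E p μ := indicatorConstLp p hBm hBfin d with hg₂def
      have hg₂coe : ⇑g₂ =ᵐ[μ] (A ∩ S n).indicator (fun _ => d) := indicatorConstLp_coeFn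
      have hg₂g : ⇑g₂ =ᵐ[μ] (A ∩ S n).indicator ⇑g := by
        filter_upwards [hg₂coe, hg] with ω h1 h2
        rw [h1]
        by_cases hω : ω ∈ A ∩ S n
        · rw [Set.indicator_of_mem hω, Set.indicator_of_mem hω, h2,
            Set.indicator_of_mem hω.1]
        · rw [Set.indicator_of_notMem hω, Set.indicator_of_notMem hω]
      have hg₂c : ⇑g₂ =ᵐ[μ] A.indicator ⇑(c n d) := by
        filter_upwards [hg₂coe, hc_coe n d] with ω h1 h2
        rw [h1]
        by_cases hωA : ω ∈ A
        · rw [Set.indicator_of_mem hωA, h2]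
          by_cases hωS : ω ∈ S n
          · rw [Set.indicator_of_mem (Set.mem_inter hωA hωS), Set.indicator_of_mem hωS]
          · rw [Set.indicator_of_notMem (fun hcon => hωS hcon.2),
              Set.indicator_of_notMem hωS]
        · rw [Set.indicator_of_notMem (fun hcon => hωA hcon.1),
            Set.indicator_of_notMem hωA]
      have h1 := hloc g g₂ hBm hg₂g
      have h2 := hloc (c n d) g₂ hA hg₂c
      filter_upwards [h1, h2, hMd d hd n] with ω hω1 hω2 hω3 hmemA hmemS
      have e1 : T g ω = T g₂ ω := by
        rw [hω1, Set.indicator_of_mem (Set.mem_inter hmemA hmemS)]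
      have e2 : T g₂ ω = T (c n d) ω := by
        rw [hω2, Set.indicator_of_mem hmemA]
      rw [e1, e2, ← hω3 hmemS]
    have hon' : ∀ᵐ ω ∂μ, ω ∈ A → T g ω = M ω d := by
      filter_upwards [ae_all_iff.2 hon] with ω hω hmem
      obtain ⟨n, hn⟩ := hSunion ω
      exact hω n hmem hn
    filter_upwards [hoff, hon', hg] with ω h1 h2 h3
    by_cases hmem : ω ∈ A
    · rw [h3, Set.indicator_of_mem hmem]
      exact h2 hmem
    · rw [h3, Set.indicator_of_notMem hmem, map_zero]
      exact h1 hmem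
  by_cases hp : p = ∞
  · intro f
    classical
    borelize E
    have hFsm : StronglyMeasurable (⇑f) := Lp.stronglyMeasurable f
    -- enumeration of D
    obtain ⟨u, hu⟩ := hDc.exists_eq_range ⟨0, D.zero_mem⟩
    suffices h : ∀ m : ℕ, ∀ᵐ ω ∂μ, ‖T f ω - M ω (f ω)‖ ≤ (‖T‖ + ‖T‖) * (1 / (m + 1)) by
      filter_upwards [ae_all_iff.2 h] with ω hω
      have htend : Tendsto (fun m : ℕ => (‖T‖ + ‖T‖) * (1 / (m + 1))) atTop (𝓝 0) := by
        have := tendsto_one_div_add_atTop_nhds_zero_nat (𝕜 := ℝ)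
        simpa using this.const_mul (‖T‖ + ‖T‖)
      have hle : ‖T f ω - M ω (f ω)‖ ≤ 0 := ge_of_tendsto' htend hω
      have : ‖T f ω - M ω (f ω)‖ = 0 := le_antisymm hle (norm_nonneg _)
      exact sub_eq_zero.mp (norm_eq_zero.mp this)
    intro m
    set ε : ℝ := 1 / (m + 1) with hεdef
    have hεpos : 0 < ε := by positivity
    set B : ℕ → Set Ω := fun j =>
      (⇑f) ⁻¹' Metric.ball (u j) ε \ ⋃ (i : ℕ) (_ : i < j), (⇑f) ⁻¹' Metric.ball (u i) ε
      with hBdef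
    have hBm : ∀ j, MeasurableSet (B j) := by
      intro j
      exact (hFsm.measurable measurableSet_ball).diff
        (MeasurableSet.iUnion fun i => MeasurableSet.iUnion fun _ =>
          hFsm.measurable measurableSet_ball)
    have hBcover : ∀ ω, ∃ j, ω ∈ B j := by
      intro ω
      have hex : ∃ i, f ω ∈ Metric.ball (u i) ε := by
        obtain ⟨y, hyD, hyd⟩ := hDd.exists_dist_lt (f ω) hεpos
        rw [hu] at hyD
        obtain ⟨i, rfl⟩ := hyD
        exact ⟨i, Metric.mem_ball.mpr hyd⟩
      refine ⟨Nat.find hex, ⟨Nat.find_spec hex, ?_⟩⟩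
      simp only [Set.mem_iUnion, Set.mem_preimage, not_exists]
      intro i hi
      exact Nat.find_min hex hi
    have hmain : ∀ j, ∀ᵐ ω ∂μ, ω ∈ B j → ‖T f ω - M ω (f ω)‖ ≤ (‖T‖ + ‖T‖) * ε := by
      intro j
      have hdD : u j ∈ (D : Set E) := by rw [hu]; exact mem_range_self j
      have hA : MeasurableSet (B j) := hBm j
      have hmem₁ : MemLp ((B j).indicator ⇑f) p μ := (Lp.memLp f).indicator hA
      have hg₁ : ⇑(hmem₁.toLp _) =ᵐ[μ] (B j).indicator ⇑f := hmem₁.coeFn_toLp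
      have hTg₁ := hloc f (hmem₁.toLp _) hA hg₁
      have hmem₂ : MemLp ((B j).indicator (fun _ => u j)) p μ := by
        have h0 : MemLp (fun _ : Ω => u j) ∞ μ := memLp_top_const (u j)
        rw [← hp] at h0
        exact h0.indicator hA
      have hg₂ : ⇑(hmem₂.toLp _) =ᵐ[μ] (B j).indicator (fun _ => u j) := hmem₂.coeFn_toLp
      have hkey₂ := hkey (u j) hdD (B j) hA (hmem₂.toLp _) hg₂
      -- the L∞ bound on the difference
      have hball : ∀ {ω}, ω ∈ B j → ‖f ω - u j‖ ≤ ε := by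
        intro ω hω
        have : f ω ∈ Metric.ball (u j) ε := hω.1
        rw [Metric.mem_ball, dist_eq_norm] at this
        exact this.le
      have hdiffnorm : ‖hmem₁.toLp _ - hmem₂.toLp _‖ ≤ ε := by
        have hd2 : ⇑(hmem₁.toLp _ - hmem₂.toLp _)
            =ᵐ[μ] (B j).indicator (fun ω => f ω - u j) := by
          filter_upwards [Lp.coeFn_sub (hmem₁.toLp _) (hmem₂.toLp _), hg₁, hg₂]
            with ω h1 h2 h3
          rw [h1, Pi.sub_apply, h2, h3]
          by_cases hω : ω ∈ B j
          · rw [Set.indicator_of_mem hω, Set.indicator_of_mem hω, Set.indicator_of_mem hω]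
          · rw [Set.indicator_of_notMem hω, Set.indicator_of_notMem hω,
              Set.indicator_of_notMem hω, sub_zero]
        rw [Lp.norm_def]
        apply ENNReal.toReal_le_of_le_ofReal hεpos.le
        rw [eLpNorm_congr_ae hd2]
        simp only [hp, eLpNorm_exponent_top]
        apply eLpNormEssSup_le_of_ae_bound
        apply ae_of_all
        intro ω
        by_cases hω : ω ∈ B j
        · rw [Set.indicator_of_mem hω]
          exact hball hω
        · rw [Set.indicator_of_notMem hω]
          simpa using hεpos.le
      have hdiff : ‖T (hmem₁.toLp _) - T (hmem₂.toLp _)‖ ≤ ‖T‖ * ε := by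
        rw [← map_sub]
        refine (T.le_opNorm _).trans ?_
        exact mul_le_mul_of_nonneg_left hdiffnorm (norm_nonneg T)
      have hdiff' := (aux_ae_le_norm_top' hp) (T (hmem₁.toLp _) - T (hmem₂.toLp _))
      filter_upwards [hTg₁, hkey₂, hdiff',
        Lp.coeFn_sub (T (hmem₁.toLp _)) (T (hmem₂.toLp _)), hg₂] with ω h1 h2 h3 h4 h5 hmemA
      have e1 : T (hmem₁.toLp _) ω = T f ω := by
        rw [h1, Set.indicator_of_mem hmemA]
      have e2 : T (hmem₂.toLp _) ω = M ω (u j) := by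
        rw [h2, h5, Set.indicator_of_mem hmemA]
      have e3 : ‖T (hmem₁.toLp _) ω - T (hmem₂.toLp _) ω‖ ≤ ‖T‖ * ε := by
        rw [← Pi.sub_apply (⇑(T (hmem₁.toLp _))) (⇑(T (hmem₂.toLp _))), ← h4]
        exact h3.trans hdiff
      have e4 : ‖M ω (u j) - M ω (f ω)‖ ≤ ‖T‖ * ε := by
        rw [← map_sub]
        refine (hM2 ω _).trans ?_
        refine mul_le_mul_of_nonneg_left ?_ (norm_nonneg T)
        rw [norm_sub_rev]
        exact hball hmemA
      calc ‖T f ω - M ω (f ω)‖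
          = ‖(T (hmem₁.toLp _) ω - T (hmem₂.toLp _) ω) + (M ω (u j) - M ω (f ω))‖ := by
            rw [← e1, ← e2, sub_add_sub_cancel]
        _ ≤ ‖T (hmem₁.toLp _) ω - T (hmem₂.toLp _) ω‖ + ‖M ω (u j) - M ω (f ω)‖ :=
            norm_add_le _ _
        _ ≤ ‖T‖ * ε + ‖T‖ * ε := add_le_add e3 e4
        _ = (‖T‖ + ‖T‖) * ε := by ring
    filter_upwards [ae_all_iff.2 hmain] with ω hω
    obtain ⟨j, hj⟩ := hBcover ω
    exact hω j hj
  · refine Lp.induction hp (fun f : Lp E p μ => ∀ᵐ ω ∂μ, T f ω = M ω (f ω)) ?_ ?_ ?_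
    · -- indicator constants
      intro x s hs hμs
      obtain ⟨u, huD, hux⟩ := mem_closure_iff_seq_limit.mp (hDd x)
      have hconv : Tendsto (fun k => indicatorConstLp p hs hμs.ne (u k)) atTop
          (𝓝 (indicatorConstLp p hs hμs.ne x)) := by
        rw [tendsto_iff_dist_tendsto_zero]
        have hdist : ∀ k, dist (indicatorConstLp p hs hμs.ne (u k))
            (indicatorConstLp p hs hμs.ne x)
            ≤ ‖u k - x‖ * (μ s).toReal ^ (1 / p.toReal) := by
          intro k
          rw [dist_eq_norm, indicatorConstLp_sub]
          exact norm_indicatorConstLp_le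
        refine squeeze_zero (fun k => dist_nonneg) hdist ?_
        have h0 : Tendsto (fun k => ‖u k - x‖) atTop (𝓝 0) :=
          tendsto_iff_norm_sub_tendsto_zero.mp hux
        simpa using h0.mul_const ((μ s).toReal ^ (1 / p.toReal))
      have hae' : ∀ k, ∀ᵐ ω ∂μ, T (indicatorConstLp p hs hμs.ne (u k)) ω
          = M ω ((indicatorConstLp p hs hμs.ne (u k)) ω) := fun k =>
        hkey (u k) (huD k) s hs _ indicatorConstLp_coeFn
      have hfin := aux_limit T M hconv hae'
      rw [Lp.simpleFunc.coe_indicatorConst]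
      exact hfin
    · -- additivity
      intro f g hf hg hdisj hPf hPg
      filter_upwards [hPf, hPg, Lp.coeFn_add (hf.toLp f) (hg.toLp g),
        Lp.coeFn_add (T (hf.toLp f)) (T (hg.toLp g))] with ω h1 h2 h3 h4
      rw [map_add, h4, Pi.add_apply, h1, h2, h3, Pi.add_apply, map_add]
    · -- closedness
      apply IsSeqClosed.isClosed
      intro x f₀ hx hconv
      exact aux_limit T M hconv hx
end

section
/- Let (Ω, Σ, μ) be a measure space, G a Banach space, p ∈ [1, ∞), and let T ∈ ℒ(L^p(Ω; G)) be a local operator. Then for every measurable set A of finite positive measure and every v ∈ G, the function T(1_A v) ∈ L^p(Ω; G) is essentially bounded with ‖T(1_A v)(ω)‖_G ≤ ‖T‖ ‖v‖_G for μ-almost every ω ∈ Ω. -/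
open MeasureTheory
open scoped ENNReal

/-- For a local operator `T ∈ ℒ(L^p(Ω; G))`, `p ∈ [1, ∞)`, and every measurable set `A`
of finite positive measure and every `v ∈ G`, the function `T(1_A v)` is essentially
bounded with `‖T(1_A v)(ω)‖ ≤ ‖T‖ ‖v‖` for a.e. `ω`. -/
theorem statement12 {Ω G : Type*} [MeasurableSpace Ω] (μ : Measure Ω)
    [NormedAddCommGroup G] [NormedSpace ℝ G] [CompleteSpace G]
    (p : ℝ≥0∞) [Fact (1 ≤ p)] (hp : p ≠ ⊤)
    (T : Lp G p μ →L[ℝ] Lp G p μ)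
    (hT : ∀ f : Lp G p μ, ∀ᵐ ω ∂μ, f ω = 0 → T f ω = 0)
    (A : Set Ω) (hA : MeasurableSet A) (hAfin : μ A ≠ ⊤) (hApos : 0 < μ A) (v : G) :
    ∀ᵐ ω ∂μ, ‖T (indicatorConstLp p hA hAfin v) ω‖ ≤ ‖T‖ * ‖v‖ := by
  set c : ℝ := ‖T‖ * ‖v‖ with hc
  have hc0 : 0 ≤ c := mul_nonneg (norm_nonneg _) (norm_nonneg _)
  set f : Lp G p μ := indicatorConstLp p hA hAfin v with hfdef
  set g : Ω → G := ⇑(T f) with hg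
  have hgm : StronglyMeasurable g := Lp.stronglyMeasurable _
  have hp0 : p ≠ 0 := by
    have h1 := Fact.out (p := 1 ≤ p)
    intro h; rw [h] at h1; exact (by simp at h1)
  have hP : 0 < p.toReal := ENNReal.toReal_pos hp0 hp
  -- Main step: for every ε > 0, the superlevel set {ω | c + ε ≤ ‖g ω‖} is null.
  have key : ∀ ε : ℝ, 0 < ε → μ {ω | c + ε ≤ ‖g ω‖} = 0 := by
    intro ε hε
    set E : Set Ω := {ω | c + ε ≤ ‖g ω‖} with hEdef
    have hE : MeasurableSet E := measurableSet_le measurable_const hgm.norm.measurable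
    -- g vanishes a.e. outside A
    have hgoff : ∀ᵐ ω ∂μ, ω ∉ A → g ω = 0 := by
      filter_upwards [hT f, indicatorConstLp_coeFn (p := p) (hs := hA) (hμs := hAfin)
        (c := v)] with ω h1 h2 hωA
      exact h1 (h2.trans (Set.indicator_of_notMem hωA _))
    have hEA0 : μ (E \ A) = 0 := by
      refine measure_mono_null ?_ (ae_iff.mp hgoff)
      rintro ω ⟨hωE, hωA⟩ hcon
      have h0 : g ω = 0 := hcon hωA
      have : c + ε ≤ ‖g ω‖ := hωE
      rw [h0, norm_zero] at this
      linarith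
    have hED : μ E = μ (E ∩ A) := by
      rw [← measure_inter_add_diff E hA, hEA0, add_zero]
    have hDfin : μ (E ∩ A) ≠ ⊤ :=
      ((measure_mono Set.inter_subset_right).trans_lt hAfin.lt_top).ne
    have hEfin : μ E ≠ ⊤ := by rw [hED]; exact hDfin
    set h : Lp G p μ := indicatorConstLp p (hE.inter hA) hDfin v with hhdef
    -- T h agrees with g a.e. on E
    have hsub : ⇑(T (f - h)) =ᵐ[μ] ⇑(T f) - ⇑(T h) := by
      rw [map_sub]; exact Lp.coeFn_sub _ _
    have hfh : ∀ᵐ ω ∂μ, ω ∈ E → (f - h) ω = 0 := by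
      filter_upwards [Lp.coeFn_sub f h,
        indicatorConstLp_coeFn (p := p) (hs := hA) (hμs := hAfin) (c := v),
        indicatorConstLp_coeFn (p := p) (hs := hE.inter hA) (hμs := hDfin) (c := v)]
          with ω h1 h2 h3 hωE
      rw [h1, Pi.sub_apply, h2, h3]
      by_cases hωA : ω ∈ A
      · rw [Set.indicator_of_mem hωA, Set.indicator_of_mem (Set.mem_inter hωE hωA), sub_self]
      · rw [Set.indicator_of_notMem hωA, Set.indicator_of_notMem
          (fun hm => hωA hm.2), sub_self]
    have hThE : ∀ᵐ ω ∂μ, ω ∈ E → T h ω = g ω := by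
      filter_upwards [hT (f - h), hsub, hfh] with ω h1 h2 h3 hωE
      have h4 := h1 (h3 hωE)
      rw [h2] at h4
      have h5 : g ω - T h ω = 0 := h4
      exact (sub_eq_zero.mp h5).symm
    -- a.e. inclusion of E into the superlevel set of T h
    have hmem : μ E ≤ μ {x | ENNReal.ofReal (c + ε) ≤ (‖T h x‖₊ : ℝ≥0∞)} := by
      refine measure_mono_ae ?_
      filter_upwards [hThE] with ω h1 hωE
      have h2 : c + ε ≤ ‖T h ω‖ := by rw [h1 hωE]; exact hωE
      calc ENNReal.ofReal (c + ε) ≤ ENNReal.ofReal ‖T h ω‖ := ENNReal.ofReal_le_ofReal h2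
        _ = (‖T h ω‖₊ : ℝ≥0∞) := ofReal_norm _
    have markov := mul_meas_ge_le_pow_eLpNorm' μ hp0 hp (Lp.aestronglyMeasurable (T h))
      (ENNReal.ofReal (c + ε))
    have hsnorm : eLpNorm (⇑(T h)) p μ = ENNReal.ofReal ‖T h‖ := by
      rw [Lp.norm_def, ENNReal.ofReal_toReal (Lp.eLpNorm_ne_top _)]
    set m : ℝ := (μ (E ∩ A)).toReal with hm
    have hm0 : 0 ≤ m := ENNReal.toReal_nonneg
    have hnormh : ‖h‖ = ‖v‖ * m ^ (1 / p.toReal) := norm_indicatorConstLp hp0 hp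
    have hTh_le : ‖T h‖ ≤ c * m ^ (1 / p.toReal) := by
      calc ‖T h‖ ≤ ‖T‖ * ‖h‖ := T.le_opNorm h
        _ = c * m ^ (1 / p.toReal) := by rw [hnormh, hc]; ring
    -- put the chain together
    by_contra hne
    have hchain : ENNReal.ofReal (c + ε) ^ p.toReal * μ E
        ≤ ENNReal.ofReal c ^ p.toReal * μ E := by
      calc ENNReal.ofReal (c + ε) ^ p.toReal * μ E
          ≤ ENNReal.ofReal (c + ε) ^ p.toReal
            * μ {x | ENNReal.ofReal (c + ε) ≤ (‖T h x‖₊ : ℝ≥0∞)} := by gcongr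
        _ ≤ eLpNorm (⇑(T h)) p μ ^ p.toReal := markov
        _ = ENNReal.ofReal ‖T h‖ ^ p.toReal := by rw [hsnorm]
        _ ≤ ENNReal.ofReal (c * m ^ (1 / p.toReal)) ^ p.toReal := by
            gcongr
        _ = ENNReal.ofReal c ^ p.toReal * ENNReal.ofReal (m ^ (1 / p.toReal)) ^ p.toReal := by
            rw [ENNReal.ofReal_mul hc0, ENNReal.mul_rpow_of_nonneg _ _ hP.le]
        _ = ENNReal.ofReal c ^ p.toReal * μ E := by
            rw [ENNReal.ofReal_rpow_of_nonneg (Real.rpow_nonneg hm0 _) hP.le]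
            rw [← Real.rpow_mul hm0, one_div_mul_cancel hP.ne', Real.rpow_one,
              hm, ENNReal.ofReal_toReal hDfin, hED]
    have h1 : ENNReal.ofReal (c + ε) ^ p.toReal ≤ ENNReal.ofReal c ^ p.toReal :=
      (ENNReal.mul_le_mul_iff_left hne hEfin).mp hchain
    have h2 : ENNReal.ofReal (c + ε) ≤ ENNReal.ofReal c :=
      (ENNReal.rpow_le_rpow_iff hP).mp h1
    have h3 : c + ε ≤ c := (ENNReal.ofReal_le_ofReal_iff hc0).mp h2
    linarith
  -- conclude via a countable union
  rw [ae_iff]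
  have hsub2 : {ω | ¬ ‖g ω‖ ≤ c} ⊆ ⋃ n : ℕ, {ω | c + 1 / (n + 1) ≤ ‖g ω‖} := by
    intro ω hω
    have hω' : c < ‖g ω‖ := lt_of_not_ge hω
    obtain ⟨n, hn⟩ := exists_nat_one_div_lt (show (0:ℝ) < ‖g ω‖ - c by linarith)
    exact Set.mem_iUnion.2 ⟨n, by simp only [Set.mem_setOf_eq]; push_cast at hn ⊢; linarith⟩
  exact measure_mono_null hsub2 (measure_iUnion_null fun n => key _ (by positivity))
end

section
/- Let F be a Banach space such that the dual F' is separable, and let (Ω, Σ, μ) be a measure space. Then for a bounded function M: Ω → ℒ(F') the following are equivalent: (i) ω ↦ ⟨M(ω)v', v⟩ is measurable for all v' ∈ F' and v ∈ F; (ii) for every v' ∈ F' the function M(·)v': Ω → F' is (a.e. equal to) a strongly measurable function. In other words, L^∞_{σ*}(Ω; ℒ(F')) = L^∞(Ω; ℒ_s(F')), where ℒ(F') is regarded as the dual of the projective tensor product F' ⊗̂_π F. -/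
open MeasureTheory
open scoped ENNReal

/-- If `F'` is a separable dual space, then for a bounded function `M : Ω → ℒ(F')` the
following are equivalent: (i) `ω ↦ ⟨M(ω)v', v⟩` is (a.e.-)measurable for all `v' ∈ F'`,
`v ∈ F`; (ii) each orbit `M(·)v'` is a.e. equal to a strongly measurable function.
In other words, `L^∞_{σ*}(Ω; ℒ(F')) = L^∞(Ω; ℒ_s(F'))`, where `ℒ(F')` is regarded as the
dual of `F' ⊗̂_π F`. -/
theorem statement13 {Ω F : Type*} [MeasurableSpace Ω] (μ : Measure Ω)
    [NormedAddCommGroup F] [NormedSpace ℝ F] [CompleteSpace F]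
    [TopologicalSpace.SeparableSpace (StrongDual ℝ F)]
    (M : Ω → StrongDual ℝ F →L[ℝ] StrongDual ℝ F)
    (hM : ∃ C : ℝ, ∀ ω, ‖M ω‖ ≤ C) :
    (∀ (v' : StrongDual ℝ F) (v : F), AEMeasurable (fun ω => M ω v' v) μ) ↔
    (∀ v' : StrongDual ℝ F, AEStronglyMeasurable (fun ω => M ω v') μ) := by
  constructor
  · intro h v'
    classical
    have hsc : SecondCountableTopology (StrongDual ℝ F) :=
      UniformSpace.secondCountable_of_separable _
    borelize (StrongDual ℝ F)
    -- dense sequence in the dual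
    obtain ⟨d, hd⟩ := TopologicalSpace.exists_dense_seq (StrongDual ℝ F)
    -- a norming sequence of vectors
    have hv : ∀ n, ∃ x : F, ‖x‖ ≤ 1 ∧ ‖d n‖ / 2 ≤ ‖d n x‖ := by
      intro n
      by_cases hdn : d n = 0
      · exact ⟨0, by simp, by simp [hdn]⟩
      · have : ‖d n‖ / 2 < ‖d n‖ := by
          have : 0 < ‖d n‖ := norm_pos_iff.2 hdn
          linarith
        obtain ⟨x, hx1, hx2⟩ := (d n).exists_lt_apply_of_lt_opNorm this
        exact ⟨x, hx1.le, hx2.le⟩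
    choose v hv1 hv2 using hv
    set S : StrongDual ℝ F → ℝ := fun g => ⨆ n, ‖g (v n)‖ with hS
    have hb : ∀ g : StrongDual ℝ F, ∀ n, ‖g (v n)‖ ≤ ‖g‖ := by
      intro g n
      calc ‖g (v n)‖ ≤ ‖g‖ * ‖v n‖ := g.le_opNorm _
        _ ≤ ‖g‖ * 1 := by
            exact mul_le_mul_of_nonneg_left (hv1 n) (norm_nonneg g)
        _ = ‖g‖ := mul_one _
    have hBdd : ∀ g : StrongDual ℝ F,
        BddAbove (Set.range fun n => ‖g (v n)‖) := fun g =>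
      ⟨‖g‖, by rintro _ ⟨n, rfl⟩; exact hb g n⟩
    have hSle : ∀ g, S g ≤ ‖g‖ := fun g => ciSup_le (hb g)
    have hSge : ∀ n, ∀ g, ‖g (v n)‖ ≤ S g := fun n g => le_ciSup (hBdd g) n
    -- the norming inequality
    have hnorm : ∀ g : StrongDual ℝ F, ‖g‖ ≤ 2 * S g := by
      intro g
      refine le_of_forall_pos_le_add fun ε hε => ?_
      obtain ⟨m, hm⟩ := hd.exists_dist_lt g (by positivity : (0:ℝ) < ε / 3)
      rw [dist_eq_norm] at hm
      have h1 : ‖d m‖ ≤ 2 * ‖d m (v m)‖ := by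
        have := hv2 m; linarith
      have h2 : ‖d m (v m)‖ ≤ ‖g (v m)‖ + ‖(d m - g) (v m)‖ := by
        have : d m (v m) = g (v m) + (d m - g) (v m) := by
          simp [ContinuousLinearMap.sub_apply]
        rw [this]; exact norm_add_le _ _
      have h3 : ‖(d m - g) (v m)‖ ≤ ε / 3 := by
        calc ‖(d m - g) (v m)‖ ≤ ‖d m - g‖ * ‖v m‖ := (d m - g).le_opNorm _
          _ ≤ (ε / 3) * 1 := by
              apply mul_le_mul ?_ (hv1 m) (norm_nonneg _) (by positivity)
              rw [norm_sub_rev]; exact hm.le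
          _ = ε / 3 := mul_one _
      have h4 : ‖g‖ ≤ ‖d m‖ + ε / 3 := by
        have := norm_sub_norm_le g (d m)
        linarith
      have h5 : ‖g (v m)‖ ≤ S g := hSge m g
      linarith
    -- the orbit and its modification
    set f : Ω → StrongDual ℝ F := fun ω => M ω v' with hf
    choose g hgm hge using fun n => h v' (v n)
    have hnull : μ (⋃ n, {ω | ¬ f ω (v n) = g n ω}) = 0 :=
      measure_iUnion_null fun n => ae_iff.1 (hge n)
    obtain ⟨t, hts, htm, ht0⟩ := exists_measurable_superset_of_null hnull
    set f' : Ω → StrongDual ℝ F := fun ω => if ω ∈ t then 0 else f ω with hf'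
    have hG : ∀ n, Measurable fun ω => f' ω (v n) := by
      intro n
      have : (fun ω => f' ω (v n)) = t.piecewise (fun _ => (0:ℝ)) (g n) := by
        funext ω
        by_cases hω : ω ∈ t
        · simp [hf', hω, Set.piecewise_eq_of_mem _ _ _ hω]
        · have hωn : f ω (v n) = g n ω := by
            by_contra hne
            exact hω (hts (Set.mem_iUnion.2 ⟨n, hne⟩))
          simp [hf', hω, Set.piecewise_eq_of_notMem _ _ _ hω, hωn]
      rw [this]
      exact Measurable.piecewise htm measurable_const (hgm n)
    -- measurability of preimages of the "closed balls" of S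
    have key : ∀ (m : ℕ) (q : ℚ),
        MeasurableSet (f' ⁻¹' {h : StrongDual ℝ F | S (h - d m) ≤ (q:ℝ)}) := by
      intro m q
      have heq : f' ⁻¹' {h : StrongDual ℝ F | S (h - d m) ≤ (q:ℝ)}
          = ⋂ n, {ω | ‖f' ω (v n) - d m (v n)‖ ≤ (q:ℝ)} := by
        ext ω
        simp only [Set.mem_preimage, Set.mem_setOf_eq, Set.mem_iInter]
        constructor
        · intro hle n
          have := hSge n (f' ω - d m)
          simp only [ContinuousLinearMap.sub_apply] at this
          exact this.trans hle
        · intro hall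
          refine ciSup_le fun n => ?_
          simpa only [ContinuousLinearMap.sub_apply] using hall n
      rw [heq]
      refine MeasurableSet.iInter fun n => ?_
      exact measurableSet_le ((hG n).sub measurable_const).norm measurable_const
    have hmeas : Measurable f' := by
      apply measurable_of_isOpen
      intro U hU
      set P : Set (ℕ × ℚ) :=
        {p | {h : StrongDual ℝ F | S (h - d p.1) ≤ (p.2:ℝ)} ⊆ U} with hP
      have hcover : U = ⋃ p ∈ P, {h : StrongDual ℝ F | S (h - d p.1) ≤ (p.2:ℝ)} := by
        apply Set.Subset.antisymm
        · intro x hx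
          obtain ⟨ε, hε, hball⟩ := Metric.isOpen_iff.1 hU x hx
          obtain ⟨m, hm⟩ := hd.exists_dist_lt x (by positivity : (0:ℝ) < ε / 8)
          rw [dist_eq_norm] at hm
          obtain ⟨q, hq1, hq2⟩ := exists_rat_btwn (show ε / 8 < ε / 4 by linarith)
          have hsub : {h : StrongDual ℝ F | S (h - d m) ≤ (q:ℝ)} ⊆ U := by
            intro h' hh'
            apply hball
            have h1 : ‖h' - d m‖ ≤ 2 * S (h' - d m) := hnorm _
            have h2 : S (h' - d m) ≤ (q:ℝ) := hh'
            rw [Metric.mem_ball, dist_eq_norm]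
            calc ‖h' - x‖ ≤ ‖h' - d m‖ + ‖d m - x‖ := norm_sub_le_norm_sub_add_norm_sub _ _ _
              _ < 2 * (q:ℝ) + ε / 8 := by
                  rw [norm_sub_rev (d m) x]
                  have : ‖h' - d m‖ ≤ 2 * (q:ℝ) := by linarith
                  have h3 : ‖x - d m‖ < ε / 8 := hm
                  -- strict from the second summand
                  exact add_lt_add_of_le_of_lt this (by rwa [norm_sub_rev x (d m)] at h3)
              _ < ε := by linarith
          refine Set.mem_biUnion (show (m, q) ∈ P from hsub) ?_
          show S (x - d m) ≤ (q:ℝ)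
          exact (hSle _).trans (le_of_lt (lt_trans (by rwa [] at hm) hq1))
        · intro x hx
          obtain ⟨p, hp, hxp⟩ := Set.mem_iUnion₂.1 hx
          exact hp hxp
      rw [hcover, Set.preimage_iUnion₂]
      exact MeasurableSet.biUnion (Set.to_countable P) fun p _ => key p.1 p.2
    have hae : f' =ᵐ[μ] f := by
      have : ∀ᵐ ω ∂μ, ω ∉ t := by
        rw [ae_iff]
        simpa using ht0
      filter_upwards [this] with ω hω
      simp [hf', hω]
    exact (hmeas.stronglyMeasurable.aestronglyMeasurable).congr hae
  · intro h v' v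
    exact ((ContinuousLinearMap.apply ℝ ℝ v).continuous.comp_aestronglyMeasurable
      (h v')).aemeasurable
end

section
/- Let (Ω, μ) be a measure space and let F and G be (real) Banach lattices. For every bounded, positive bilinear map φ: L¹(Ω) × F → G there exists a unique bounded linear operator T: L¹(Ω; F) → G such that T(f(·)v) = φ(f, v) for all f ∈ L¹(Ω) and v ∈ F; moreover T is positive and ‖T‖ = ‖φ‖. (Equivalently: L¹(Ω; F), together with the bilinear map (f, v) ↦ f(·)v, is a p-tensor product of L¹(Ω) and F, so L¹(Ω) ⊗̂_p F ≅ L¹(Ω; F) as Banach lattices, isometrically.) -/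
open MeasureTheory
open scoped ENNReal

section Aux

variable {Ω F G : Type*} [MeasurableSpace Ω] {μ : Measure Ω}
    [NormedAddCommGroup F] [Lattice F] [HasSolidNorm F] [IsOrderedAddMonoid F] [NormedSpace ℝ F] [CompleteSpace F]
    [NormedAddCommGroup G] [Lattice G] [HasSolidNorm G] [IsOrderedAddMonoid G] [NormedSpace ℝ G] [CompleteSpace G]

open Classical in
noncomputable def st16Tm (μ : Measure Ω) (φ : Lp ℝ 1 μ →L[ℝ] F →L[ℝ] G) : Set Ω → F →L[ℝ] G :=
  fun s => if h : MeasurableSet s ∧ μ s ≠ ∞ then φ (indicatorConstLp 1 h.1 h.2 (1:ℝ)) else 0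

theorem st16Tm_eq (φ : Lp ℝ 1 μ →L[ℝ] F →L[ℝ] G) {s : Set Ω} (hs : MeasurableSet s)
    (hμs : μ s ≠ ∞) : st16Tm μ φ s = φ (indicatorConstLp 1 hs hμs (1:ℝ)) := by
  simp only [st16Tm, dif_pos (And.intro hs hμs)]

theorem st16_dom (φ : Lp ℝ 1 μ →L[ℝ] F →L[ℝ] G) :
    DominatedFinMeasAdditive μ (st16Tm μ φ) ‖φ‖ := by
  constructor
  · intro s t hs ht hμs hμt hst
    rw [st16Tm_eq φ (hs.union ht) (measure_union_ne_top hμs hμt), st16Tm_eq φ hs hμs,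
      st16Tm_eq φ ht hμt, indicatorConstLp_disjoint_union hs ht hμs hμt hst, map_add]
  · intro s hs hμs
    rw [st16Tm_eq φ hs hμs.ne]
    calc ‖φ (indicatorConstLp 1 hs hμs.ne (1:ℝ))‖
        ≤ ‖φ‖ * ‖indicatorConstLp 1 hs hμs.ne (1:ℝ)‖ := φ.le_opNorm _
      _ = ‖φ‖ * (μ s).toReal := by
          rw [norm_indicatorConstLp one_ne_zero ENNReal.one_ne_top]
          simp [Measure.real]

theorem st16_comp (v : F) {s : Set Ω} (hs : MeasurableSet s) (hμs : μ s ≠ ∞) (c : ℝ) :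
    (ContinuousLinearMap.toSpanSingleton ℝ v).compLpL 1 μ (indicatorConstLp 1 hs hμs c)
      = indicatorConstLp 1 hs hμs (c • v) := by
  apply Lp.ext
  filter_upwards [ContinuousLinearMap.coeFn_compLpL (p := 1) (μ := μ)
      (ContinuousLinearMap.toSpanSingleton ℝ v) (indicatorConstLp 1 hs hμs c),
    indicatorConstLp_coeFn (p := 1) (μ := μ) (hs := hs) (hμs := hμs) (c := c),
    indicatorConstLp_coeFn (p := 1) (μ := μ) (hs := hs) (hμs := hμs) (c := c • v)]
    with ω h1 h2 h3
  rw [h1, h2, h3, ContinuousLinearMap.toSpanSingleton_apply]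
  by_cases hω : ω ∈ s <;> simp [hω]

theorem st16_smul {s : Set Ω} (hs : MeasurableSet s) (hμs : μ s ≠ ∞) (c : ℝ) :
    indicatorConstLp 1 hs hμs c = c • indicatorConstLp 1 hs hμs (1:ℝ) := by
  apply Lp.ext
  filter_upwards [indicatorConstLp_coeFn (p := 1) (μ := μ) (hs := hs) (hμs := hμs) (c := c),
    indicatorConstLp_coeFn (p := 1) (μ := μ) (hs := hs) (hμs := hμs) (c := (1:ℝ)),
    Lp.coeFn_smul c (indicatorConstLp 1 hs hμs (1:ℝ))] with ω h1 h2 h3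
  rw [h1, h3]
  simp only [Pi.smul_apply, h2]
  by_cases hω : ω ∈ s <;> simp [hω]

theorem st16_key (φ : Lp ℝ 1 μ →L[ℝ] F →L[ℝ] G) (v : F) (f : Lp ℝ 1 μ) :
    L1.setToL1 (st16_dom φ) ((ContinuousLinearMap.toSpanSingleton ℝ v).compLpL 1 μ f)
      = φ f v := by
  induction f using Lp.induction (hp_ne_top := ENNReal.one_ne_top) with
  | @indicatorConst c s hs hμs =>
    rw [Lp.simpleFunc.coe_indicatorConst, st16_comp v hs hμs.ne c,
      L1.setToL1_indicatorConstLp (st16_dom φ) hs hμs.ne, st16Tm_eq φ hs hμs.ne,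
      st16_smul hs hμs.ne c]
    simp [_root_.map_smul]
  | @add f g hf hg hfg hPf hPg =>
    rw [map_add, map_add, map_add, ContinuousLinearMap.add_apply, hPf, hPg]
  | isClosed =>
    exact isClosed_eq
      ((L1.setToL1 (st16_dom φ)).continuous.comp
        ((ContinuousLinearMap.toSpanSingleton ℝ v).compLpL 1 μ).continuous)
      (φ.flip v).continuous

end Aux

/-- **`L¹(Ω) ⊗̂_p F ≅ L¹(Ω; F)` (universal property of the p-tensor product).** Let
`(Ω, μ)` be a measure space and `F`, `G` real Banach lattices. For every bounded, positive
bilinear map `φ : L¹(Ω) × F → G` there is a unique bounded linear `T : L¹(Ω; F) → G` with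
`T(f(·)v) = φ(f, v)`; moreover `T` is positive and `‖T‖ = ‖φ‖`. Bounded bilinear maps are
encoded as continuous linear maps `L¹(Ω) →L F →L G`, whose operator norm is the bilinear
norm. -/
theorem statement16 {Ω F G : Type*} [MeasurableSpace Ω] (μ : Measure Ω)
    [NormedAddCommGroup F] [Lattice F] [HasSolidNorm F] [IsOrderedAddMonoid F] [NormedSpace ℝ F] [CompleteSpace F]
    [NormedAddCommGroup G] [Lattice G] [HasSolidNorm G] [IsOrderedAddMonoid G] [NormedSpace ℝ G] [CompleteSpace G]
    (φ : Lp ℝ 1 μ →L[ℝ] F →L[ℝ] G)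
    (hφpos : ∀ f : Lp ℝ 1 μ, (∀ᵐ ω ∂μ, 0 ≤ f ω) → ∀ v : F, 0 ≤ v → 0 ≤ φ f v) :
    (∃! T : Lp F 1 μ →L[ℝ] G,
      ∀ (f : Lp ℝ 1 μ) (v : F) (g : Lp F 1 μ),
        (g : Ω → F) =ᵐ[μ] (fun ω => f ω • v) → T g = φ f v) ∧
    (∀ T : Lp F 1 μ →L[ℝ] G,
      (∀ (f : Lp ℝ 1 μ) (v : F) (g : Lp F 1 μ),
        (g : Ω → F) =ᵐ[μ] (fun ω => f ω • v) → T g = φ f v) →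
      (∀ g : Lp F 1 μ, (∀ᵐ ω ∂μ, 0 ≤ g ω) → 0 ≤ T g) ∧ ‖T‖ = ‖φ‖) := by
  set T0 : Lp F 1 μ →L[ℝ] G := L1.setToL1 (st16_dom φ) with hT0def
  -- T0 satisfies the defining property
  have hT0P : ∀ (f : Lp ℝ 1 μ) (v : F) (g : Lp F 1 μ),
      (g : Ω → F) =ᵐ[μ] (fun ω => f ω • v) → T0 g = φ f v := by
    intro f v g hg
    have hco : ((ContinuousLinearMap.toSpanSingleton ℝ v).compLpL 1 μ f : Ω → F)
        =ᵐ[μ] (fun ω => f ω • v) := by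
      filter_upwards [ContinuousLinearMap.coeFn_compLpL (p := 1) (μ := μ)
        (ContinuousLinearMap.toSpanSingleton ℝ v) f] with ω h
      rw [h, ContinuousLinearMap.toSpanSingleton_apply]
    have : g = (ContinuousLinearMap.toSpanSingleton ℝ v).compLpL 1 μ f :=
      Lp.ext (hg.trans hco.symm)
    rw [this, st16_key]
  -- uniqueness
  have huniq : ∀ T : Lp F 1 μ →L[ℝ] G,
      (∀ (f : Lp ℝ 1 μ) (v : F) (g : Lp F 1 μ),
        (g : Ω → F) =ᵐ[μ] (fun ω => f ω • v) → T g = φ f v) → T = T0 := by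
    intro T hT
    suffices h : ∀ g : Lp F 1 μ, T g = T0 g by ext g; exact h g
    apply Lp.induction ENNReal.one_ne_top (fun g => T g = T0 g)
    · intro v s hs hμs
      have hcond : ((Lp.simpleFunc.indicatorConst 1 hs hμs.ne v : Lp F 1 μ) : Ω → F)
          =ᵐ[μ] (fun ω => (indicatorConstLp 1 hs hμs.ne (1:ℝ)) ω • v) := by
        rw [Lp.simpleFunc.coe_indicatorConst]
        filter_upwards [indicatorConstLp_coeFn (p := 1) (μ := μ) (hs := hs)
            (hμs := hμs.ne) (c := v),
          indicatorConstLp_coeFn (p := 1) (μ := μ) (hs := hs) (hμs := hμs.ne)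
            (c := (1:ℝ))] with ω h1 h2
        rw [h1, h2]
        by_cases hω : ω ∈ s <;> simp [hω]
      rw [hT _ _ _ hcond, hT0P _ _ _ hcond]
    · intro f g hf hg _ h1 h2
      rw [map_add, map_add, h1, h2]
    · exact isClosed_eq T.continuous T0.continuous
  -- positivity of T0
  have hpos : ∀ g : Lp F 1 μ, (∀ᵐ ω ∂μ, 0 ≤ g ω) → 0 ≤ T0 g := by
    intro g hg
    refine L1.setToL1_nonneg (st16_dom φ) ?_ ((Lp.coeFn_nonneg g).1 hg)
    intro s hs hμs x hx
    rw [st16Tm_eq φ hs hμs.ne]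
    refine hφpos _ ?_ x hx
    filter_upwards [indicatorConstLp_coeFn (p := 1) (μ := μ) (hs := hs) (hμs := hμs.ne)
      (c := (1:ℝ))] with ω h
    rw [h]
    exact Set.indicator_nonneg (fun _ _ => zero_le_one) ω
  -- norm equality for T0
  have hnorm : ‖T0‖ = ‖φ‖ := by
    refine le_antisymm (L1.norm_setToL1_le (st16_dom φ) (norm_nonneg φ)) ?_
    refine ContinuousLinearMap.opNorm_le_bound φ (norm_nonneg T0) fun f => ?_
    refine ContinuousLinearMap.opNorm_le_bound _
      (mul_nonneg (norm_nonneg T0) (norm_nonneg f)) fun v => ?_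
    rw [← st16_key φ v f]
    calc ‖T0 ((ContinuousLinearMap.toSpanSingleton ℝ v).compLpL 1 μ f)‖
        ≤ ‖T0‖ * ‖(ContinuousLinearMap.toSpanSingleton ℝ v).compLpL 1 μ f‖ :=
          T0.le_opNorm _
      _ ≤ ‖T0‖ * (‖ContinuousLinearMap.toSpanSingleton ℝ v‖ * ‖f‖) := by
          gcongr
          exact ContinuousLinearMap.le_of_opNorm_le _
            (ContinuousLinearMap.norm_compLpL_le (p := 1) (μ := μ) _) f
      _ = ‖T0‖ * ‖f‖ * ‖v‖ := by
          rw [ContinuousLinearMap.norm_toSpanSingleton]; ring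
  refine ⟨⟨T0, hT0P, huniq⟩, fun T hT => ?_⟩
  rw [huniq T hT]
  exact ⟨hpos, hnorm⟩
end
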